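/- Let q be a positive rational number and let M_q := ⟨q^n : n ∈ ℕ₀⟩ be the additive submonoid of ℚ≥0 generated by the nonnegative powers of q. If the monoid algebra ℤ[M_q] is atomic, then the monoid algebra ℚ[M_q] is atomic. -/

import Mathlib

/-- The exponentially cyclic Puiseux monoid `M_q = ⟨q^n : n ∈ ℕ₀⟩`,
as an additive submonoid of `ℚ`. -/
def Mq (q : ℚ) : AddSubmonoid ℚ :=
  AddSubmonoid.closure (Set.range fun n : ℕ => q ^ n)

/-- A commutative ring is atomic if every nonzero nonunit is a finite
product of irreducible elements. -/
def IsAtomicRing (R : Type*) [CommRing R] : Prop :=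
  ∀ r : R, r ≠ 0 → ¬ IsUnit r →
    ∃ s : Multiset R, (∀ a ∈ s, Irreducible a) ∧ s.prod = r

namespace AtomicAux

open AddMonoidAlgebra Finsupp

variable {M : AddSubmonoid ℚ}

/-- Constant (integer coefficients). -/
noncomputable abbrev Ci (M : AddSubmonoid ℚ) (r : ℤ) : AddMonoidAlgebra ℤ M :=
  AddMonoidAlgebra.single 0 r

/-- Constant (rational coefficients). -/
noncomputable abbrev Cq (M : AddSubmonoid ℚ) (r : ℚ) : AddMonoidAlgebra ℚ M :=
  AddMonoidAlgebra.single 0 r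

lemma Cq_mul (r s : ℚ) : Cq M r * Cq M s = Cq M (r * s) := by
  rw [show (Cq M r) * Cq M s = AddMonoidAlgebra.single 0 r * AddMonoidAlgebra.single 0 s from rfl,
    AddMonoidAlgebra.single_mul_single, zero_add]

lemma Ci_mul (r s : ℤ) : Ci M r * Ci M s = Ci M (r * s) := by
  rw [show (Ci M r) * Ci M s = AddMonoidAlgebra.single 0 r * AddMonoidAlgebra.single 0 s from rfl,
    AddMonoidAlgebra.single_mul_single, zero_add]

lemma Cq_one : Cq M 1 = 1 := rfl
lemma Ci_one : Ci M 1 = 1 := rfl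

lemma isUnit_Cq {r : ℚ} (hr : r ≠ 0) : IsUnit (Cq M r) :=
  IsUnit.of_mul_eq_one (Cq M r⁻¹) (by rw [Cq_mul, mul_inv_cancel₀ hr, Cq_one])

lemma Ci_mul_apply (r : ℤ) (f : AddMonoidAlgebra ℤ M) (a : M) :
    (Ci M r * f).coeff a = r * f.coeff a :=
  AddMonoidAlgebra.coeff_single_zero_mul f r a

lemma Cq_mul_single (r b : ℚ) (a : M) :
    Cq M r * (AddMonoidAlgebra.single a b) = AddMonoidAlgebra.single a (r * b) := by
  rw [show Cq M r = AddMonoidAlgebra.single (0:M) r from rfl,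
    AddMonoidAlgebra.single_mul_single, zero_add]

lemma Ci_ne_zero {r : ℤ} (hr : r ≠ 0) : Ci M r ≠ 0 :=
  fun h => hr (AddMonoidAlgebra.single_eq_zero.mp h)

lemma Cq_ne_zero {r : ℚ} (hr : r ≠ 0) : Cq M r ≠ 0 :=
  fun h => hr (AddMonoidAlgebra.single_eq_zero.mp h)

/-- Coefficient extension ring hom `ℤ[M] →+* S[M]`. -/
noncomputable def mapC (S : Type) [CommRing S] (M : AddSubmonoid ℚ) :
    AddMonoidAlgebra ℤ M →+* AddMonoidAlgebra S M :=
  ((AddMonoidAlgebra.lift ℤ (AddMonoidAlgebra S M) M (AddMonoidAlgebra.of S M)) :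
    AddMonoidAlgebra ℤ M →ₐ[ℤ] AddMonoidAlgebra S M).toRingHom

lemma mapC_single (S : Type) [CommRing S] (a : M) (b : ℤ) :
    mapC S M (AddMonoidAlgebra.single a b) = AddMonoidAlgebra.single a (b : S) := by
  show (AddMonoidAlgebra.lift ℤ (AddMonoidAlgebra S M) M (AddMonoidAlgebra.of S M))
      (AddMonoidAlgebra.single a b) = _
  rw [AddMonoidAlgebra.lift_single, AddMonoidAlgebra.of_apply]
  rw [show Multiplicative.toAdd (Multiplicative.ofAdd a) = a from rfl]
  rw [AddMonoidAlgebra.smul_single]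
  congr 1
  simp [zsmul_eq_mul]

lemma mapC_apply (S : Type) [CommRing S] (f : AddMonoidAlgebra ℤ M) (a : M) :
    (mapC S M f).coeff a = ((f.coeff a : ℤ) : S) := by
  induction f using AddMonoidAlgebra.induction_linear with
  | zero => simp
  | add f g hf hg => rw [map_add, AddMonoidAlgebra.coeff_add, AddMonoidAlgebra.coeff_add,
      Finsupp.add_apply, Finsupp.add_apply, hf, hg, Int.cast_add]
  | single b c =>
      rw [mapC_single, AddMonoidAlgebra.coeff_single, AddMonoidAlgebra.coeff_single,
        Finsupp.single_apply, Finsupp.single_apply, apply_ite (Int.cast : ℤ → S),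
        Int.cast_zero]

lemma mapC_injective : Function.Injective (mapC ℚ M) := by
  intro f g hfg
  ext a
  have := congrArg (fun h => h.coeff a) hfg
  simp only [mapC_apply] at this
  exact_mod_cast this

lemma mapC_Ci (r : ℤ) : mapC ℚ M (Ci M r) = Cq M (r : ℚ) := by
  rw [show Ci M r = AddMonoidAlgebra.single (0:M) r from rfl, mapC_single]

lemma Ci_dvd_iff (r : ℤ) (f : AddMonoidAlgebra ℤ M) :
    Ci M r ∣ f ↔ ∀ a : M, r ∣ f.coeff a := by
  constructor
  · rintro ⟨g, rfl⟩ a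
    exact ⟨g.coeff a, Ci_mul_apply r g a⟩
  · intro hall
    refine ⟨AddMonoidAlgebra.ofCoeff (Finsupp.mapRange (fun x => x / r) (by simp) f.coeff), ?_⟩
    ext a
    rw [Ci_mul_apply, AddMonoidAlgebra.coeff_ofCoeff, Finsupp.mapRange_apply, Int.mul_ediv_cancel' (hall a)]

/-- Integer primes stay prime in `ℤ[M]`. -/
lemma prime_Ci (p : ℕ) (hp : p.Prime) : Prime (Ci M (p : ℤ)) := by
  haveI : Fact p.Prime := ⟨hp⟩
  refine ⟨?_, ?_, ?_⟩
  · intro h0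
    have := congrArg (fun f : AddMonoidAlgebra ℤ M => f.coeff 0) h0
    simp only [AddMonoidAlgebra.coeff_single, AddMonoidAlgebra.coeff_zero, Finsupp.single_eq_same, Finsupp.coe_zero, Pi.zero_apply] at this
    exact_mod_cast hp.ne_zero (by exact_mod_cast this)
  · rintro ⟨u, hu⟩
    have h1 : (Ci M (p:ℤ)) * ↑u⁻¹ = 1 := by
      rw [← hu]; exact u.mul_inv
    have := congrArg (fun f : AddMonoidAlgebra ℤ M => f.coeff 0) h1
    simp only [Ci_mul_apply] at this
    have h2 : (1 : AddMonoidAlgebra ℤ M).coeff 0 = 1 := AddMonoidAlgebra.coeff_one_zero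
    rw [h2] at this
    have : (p : ℤ) ∣ 1 := ⟨_, this.symm⟩
    have := Int.isUnit_iff.mp (isUnit_of_dvd_one this)
    have h2le := hp.two_le
    rcases this with h | h <;> omega
  · intro x y hxy
    have key : ∀ f : AddMonoidAlgebra ℤ M, Ci M (p:ℤ) ∣ f ↔ mapC (ZMod p) M f = 0 := by
      intro f
      rw [Ci_dvd_iff]
      constructor
      · intro hall; ext a
        rw [mapC_apply]
        simpa [ZMod.intCast_zmod_eq_zero_iff_dvd] using hall a
      · intro h0 a
        have := congrArg (fun g : AddMonoidAlgebra (ZMod p) M => g.coeff a) h0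
        simp only [mapC_apply, AddMonoidAlgebra.coeff_zero, Finsupp.coe_zero, Pi.zero_apply] at this
        exact (ZMod.intCast_zmod_eq_zero_iff_dvd _ p).mp this
    rw [key] at hxy ⊢
    rw [key y]
    rw [map_mul] at hxy
    rcases mul_eq_zero.mp hxy with h | h
    · exact Or.inl h
    · exact Or.inr h

/-- Clearing denominators. -/
lemma exists_int_rep (F : AddMonoidAlgebra ℚ M) :
    ∃ n : ℕ, n ≠ 0 ∧ ∃ f : AddMonoidAlgebra ℤ M, mapC ℚ M f = Cq M (n : ℚ) * F := by
  induction F using AddMonoidAlgebra.induction_linear with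
  | zero => exact ⟨1, one_ne_zero, 0, by simp⟩
  | add F G hF hG =>
      obtain ⟨n1, hn1, f1, hf1⟩ := hF
      obtain ⟨n2, hn2, f2, hf2⟩ := hG
      refine ⟨n1 * n2, Nat.mul_ne_zero hn1 hn2, Ci M n2 * f1 + Ci M n1 * f2, ?_⟩
      rw [map_add, map_mul, map_mul, hf1, hf2, mapC_Ci, mapC_Ci]
      have e3 : Cq M ((n1 * n2 : ℕ) : ℚ) = Cq M (n1:ℚ) * Cq M (n2:ℚ) := by
        rw [Cq_mul]; norm_num
      rw [e3]
      push_cast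
      ring
  | single a b =>
      refine ⟨b.den, b.den_nz, AddMonoidAlgebra.single a b.num, ?_⟩
      rw [mapC_single]
      rw [Cq_mul_single]
      congr 1
      rw [mul_comm]
      exact (div_eq_iff (by exact_mod_cast b.den_nz)).mp (Rat.num_div_den b)

/-- Stripping prime constants from a factorization. -/
lemma strip {a : AddMonoidAlgebra ℤ M} :
    ∀ k : ℕ, k ≠ 0 → ∀ x y : AddMonoidAlgebra ℤ M, Ci M (k : ℤ) * a = x * y →
      ∃ (x1 y1 : AddMonoidAlgebra ℤ M) (c d : ℤ), a = x1 * y1 ∧ c ≠ 0 ∧ d ≠ 0 ∧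
        x = Ci M c * x1 ∧ y = Ci M d * y1 := by
  intro k
  induction k using Nat.strong_induction_on with
  | _ k ih =>
    intro hk x y hxy
    rcases eq_or_ne k 1 with rfl | hk1
    · have h1 : Ci M ((1:ℕ):ℤ) = 1 := rfl
      rw [h1, one_mul] at hxy
      exact ⟨x, y, 1, 1, hxy, one_ne_zero, one_ne_zero,
        (by rw [show Ci M 1 = 1 from rfl, one_mul]),
        (by rw [show Ci M 1 = 1 from rfl, one_mul])⟩
    · obtain ⟨p, hp, m, rfl⟩ : ∃ p, p.Prime ∧ ∃ m, k = p * m := by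
        obtain ⟨p, hp, hdvd⟩ := Nat.exists_prime_and_dvd hk1
        exact ⟨p, hp, hdvd⟩
      have hm : m ≠ 0 := by rintro rfl; simp at hk
      have hprime := prime_Ci (M := M) p hp
      have hdvd : Ci M (p:ℤ) ∣ x * y := by
        refine ⟨Ci M (m:ℤ) * a, ?_⟩
        rw [← hxy, ← mul_assoc, Ci_mul]
        norm_num
      rcases hprime.2.2 x y hdvd with ⟨x', rfl⟩ | ⟨y', rfl⟩
      · have hcancel : Ci M (m : ℤ) * a = x' * y := by
          have h2 : Ci M (p:ℤ) * (Ci M (m:ℤ) * a) = Ci M (p:ℤ) * (x' * y) := by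
            rw [← mul_assoc, Ci_mul, ← mul_assoc]
            rw [show ((p:ℤ) * (m:ℤ)) = ((p*m : ℕ) : ℤ) by push_cast; ring]
            exact hxy
          exact mul_left_cancel₀ (Ci_ne_zero (by exact_mod_cast hp.ne_zero)) h2
        obtain ⟨x1, y1, c, d, h1, hc, hd, h2, h3⟩ := ih m (by
          have h2 := hp.two_le
          have h3 := Nat.pos_of_ne_zero hm
          nlinarith) hm x' y hcancel
        exact ⟨x1, y1, (p:ℤ) * c, d, h1, mul_ne_zero (by exact_mod_cast hp.ne_zero) hc, hd,
          by rw [h2, ← mul_assoc, Ci_mul], h3⟩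
      · have hcancel : Ci M (m : ℤ) * a = x * y' := by
          have h2 : Ci M (p:ℤ) * (Ci M (m:ℤ) * a) = Ci M (p:ℤ) * (x * y') := by
            rw [← mul_assoc, Ci_mul, ← mul_assoc]
            rw [show ((p:ℤ) * (m:ℤ)) = ((p*m : ℕ) : ℤ) by push_cast; ring]
            rw [hxy]; ring
          exact mul_left_cancel₀ (Ci_ne_zero (by exact_mod_cast hp.ne_zero)) h2
        obtain ⟨x1, y1, c, d, h1, hc, hd, h2, h3⟩ := ih m (by
          have h2 := hp.two_le
          have h3 := Nat.pos_of_ne_zero hm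
          nlinarith) hm x y' hcancel
        exact ⟨x1, y1, c, (p:ℤ) * d, h1, hc, mul_ne_zero (by exact_mod_cast hp.ne_zero) hd,
          h2, by rw [h3, ← mul_assoc, Ci_mul]⟩

/-- An irreducible of `ℤ[M]` maps to a unit or an irreducible of `ℚ[M]`. -/
lemma irr_or_unit {a : AddMonoidAlgebra ℤ M} (ha : Irreducible a) :
    IsUnit (mapC ℚ M a) ∨ Irreducible (mapC ℚ M a) := by
  by_cases hu : IsUnit (mapC ℚ M a)
  · exact Or.inl hu
  right
  refine ⟨hu, ?_⟩
  intro X Y hXY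
  obtain ⟨nX, hnX, x, hx⟩ := exists_int_rep X
  obtain ⟨nY, hnY, y, hy⟩ := exists_int_rep Y
  have hnXq : ((nX:ℚ)) ≠ 0 := by exact_mod_cast hnX
  have hnYq : ((nY:ℚ)) ≠ 0 := by exact_mod_cast hnY
  have key : mapC ℚ M (Ci M ((nX * nY : ℕ) : ℤ) * a) = mapC ℚ M (x * y) := by
    rw [map_mul, map_mul, hx, hy, mapC_Ci, hXY]
    rw [show Cq M (((nX*nY:ℕ):ℤ) : ℚ) = Cq M (nX:ℚ) * Cq M (nY:ℚ) by rw [Cq_mul]; push_cast; ring_nf]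
    ring
  have key2 := mapC_injective key
  obtain ⟨x1, y1, c, d, h1, hc, hd, hx1, hy1⟩ :=
    strip (nX * nY) (Nat.mul_ne_zero hnX hnY) x y key2
  rcases ha.isUnit_or_isUnit h1 with hux | huy
  · left
    have e : Cq M (nX:ℚ) * X = Cq M (nX:ℚ) * (Cq M ((nX:ℚ)⁻¹ * c) * mapC ℚ M x1) := by
      rw [← hx, hx1, map_mul, mapC_Ci, ← mul_assoc, Cq_mul]
      congr 2
      field_simp
    have hXeq := mul_left_cancel₀ (Cq_ne_zero hnXq) e
    rw [hXeq]
    exact (isUnit_Cq (mul_ne_zero (inv_ne_zero hnXq) (by exact_mod_cast hc))).mul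
      (hux.map (mapC ℚ M))
  · right
    have e : Cq M (nY:ℚ) * Y = Cq M (nY:ℚ) * (Cq M ((nY:ℚ)⁻¹ * d) * mapC ℚ M y1) := by
      rw [← hy, hy1, map_mul, mapC_Ci, ← mul_assoc, Cq_mul]
      congr 2
      field_simp
    have hYeq := mul_left_cancel₀ (Cq_ne_zero hnYq) e
    rw [hYeq]
    exact (isUnit_Cq (mul_ne_zero (inv_ne_zero hnYq) (by exact_mod_cast hd))).mul
      (huy.map (mapC ℚ M))

lemma multiset_step (t : Multiset (AddMonoidAlgebra ℚ M)) :
    ∀ u : AddMonoidAlgebra ℚ M, IsUnit u →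
      (∀ X ∈ t, IsUnit X ∨ Irreducible X) → ¬ IsUnit (u * t.prod) →
      ∃ s : Multiset (AddMonoidAlgebra ℚ M),
        (∀ a ∈ s, Irreducible a) ∧ s.prod = u * t.prod := by
  induction t using Multiset.induction_on with
  | empty =>
      intro u hu _ hnu
      exact absurd (by simpa using hu) hnu
  | cons a t ih =>
      intro u hu ht hnu
      rw [Multiset.prod_cons] at hnu
      have ht' : ∀ X ∈ t, IsUnit X ∨ Irreducible X :=
        fun X hX => ht X (Multiset.mem_cons_of_mem hX)
      rcases ht a (Multiset.mem_cons_self a t) with hau | hai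
      · obtain ⟨s, hs1, hs2⟩ := ih (u * a) (hu.mul hau) ht'
          (by rw [mul_assoc]; exact hnu)
        exact ⟨s, hs1, by rw [hs2, Multiset.prod_cons]; ring⟩
      · by_cases h2 : IsUnit (u * t.prod)
        · refine ⟨{u * t.prod * a}, ?_, ?_⟩
          · intro b hb
            rw [Multiset.mem_singleton] at hb
            subst hb
            exact (irreducible_isUnit_mul h2).mpr hai
          · rw [Multiset.prod_singleton, Multiset.prod_cons]; ring
        · obtain ⟨s, hs1, hs2⟩ := ih u hu ht' h2
          refine ⟨a ::ₘ s, ?_, ?_⟩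
          · intro b hb
            rcases Multiset.mem_cons.mp hb with rfl | hb
            · exact hai
            · exact hs1 b hb
          · rw [Multiset.prod_cons, hs2, Multiset.prod_cons]; ring

end AtomicAux

theorem atomic_int_monoidAlgebra_imp_atomic_rat (q : ℚ) (hq : 0 < q)
    (h : IsAtomicRing (AddMonoidAlgebra ℤ (Mq q))) :
    IsAtomicRing (AddMonoidAlgebra ℚ (Mq q)) := by
  classical
  set M := Mq q with hM
  intro F hF0 hFu
  obtain ⟨n, hn, f, hf⟩ := AtomicAux.exists_int_rep F
  have hnq : ((n:ℚ)) ≠ 0 := by exact_mod_cast hn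
  have hCu : IsUnit (AtomicAux.Cq M (n:ℚ)) := AtomicAux.isUnit_Cq hnq
  have hf0 : f ≠ 0 := by
    rintro rfl
    rw [map_zero] at hf
    exact hF0 ((hCu.mul_right_eq_zero).mp hf.symm)
  have hfu : ¬ IsUnit f := by
    intro hu
    have h2 := hu.map (AtomicAux.mapC ℚ M)
    rw [hf] at h2
    exact hFu (isUnit_of_mul_isUnit_right h2)
  obtain ⟨s, hs, hprod⟩ := h f hf0 hfu
  have hFeq : F = AtomicAux.Cq M (n:ℚ)⁻¹ * (s.map (AtomicAux.mapC ℚ M)).prod := by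
    have e1 : (s.map (AtomicAux.mapC ℚ M)).prod = AtomicAux.mapC ℚ M f := by
      rw [← hprod, map_multiset_prod]
    rw [e1, hf, ← mul_assoc, AtomicAux.Cq_mul, inv_mul_cancel₀ hnq, AtomicAux.Cq_one, one_mul]
  have ht : ∀ X ∈ s.map (AtomicAux.mapC ℚ M), IsUnit X ∨ Irreducible X := by
    intro X hX
    obtain ⟨a, ha, rfl⟩ := Multiset.mem_map.mp hX
    exact AtomicAux.irr_or_unit (hs a ha)
  obtain ⟨s', hs1, hs2⟩ := AtomicAux.multiset_step (s.map (AtomicAux.mapC ℚ M))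
    (AtomicAux.Cq M (n:ℚ)⁻¹) (AtomicAux.isUnit_Cq (inv_ne_zero hnq)) ht
    (by rw [← hFeq]; exact hFu)
  exact ⟨s', hs1, by rw [hs2, ← hFeq]⟩
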